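/- arXiv:1012.3109 — 2 statements merged into one kernel-verified Lean document; each statement's English description precedes it below -/
import Mathlib

section
/- Let κ = γ√(λ² + μ²) (branch with Re κ > 0 for Re λ > 0) and κ₁ = γ|v|λ, where γ = 1/√(1−v²), μ = m/γ, 0 < |v| < 1, m > 0. Then for all λ ∈ ℂ with Re λ > 0, one has 0 < Re κ₁ < Re κ. -/
open Complex

/-- With γ = 1/√(1−v²), μ = m/γ, 0 < |v| < 1, m > 0, κ the branch of γ√(λ²+μ²)
with Re κ > 0, and κ₁ = γ|v|λ, one has 0 < Re κ₁ < Re κ for Re λ > 0. -/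
theorem green_exponent_inequality (s : ℝ) (hs0 : 0 < s) (hs1 : s < 1) (m : ℝ) (hm : 0 < m)
    (lam : ℂ) (hlam : 0 < lam.re) (kappa : ℂ)
    (hkappa : kappa ^ 2 =
      ((1 / Real.sqrt (1 - s ^ 2) : ℝ) : ℂ) ^ 2 *
        (lam ^ 2 + ((m * Real.sqrt (1 - s ^ 2) : ℝ) : ℂ) ^ 2))
    (hkre : 0 < kappa.re) :
    let kappa₁ : ℂ := ((1 / Real.sqrt (1 - s ^ 2) : ℝ) : ℂ) * (s : ℂ) * lam
    0 < kappa₁.re ∧ kappa₁.re < kappa.re := by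
  intro kappa₁
  have hs2 : 0 < 1 - s ^ 2 := by nlinarith
  have hg : 0 < Real.sqrt (1 - s ^ 2) := Real.sqrt_pos.mpr hs2
  have hg2 : Real.sqrt (1 - s ^ 2) ^ 2 = 1 - s ^ 2 := Real.sq_sqrt hs2.le
  set g := Real.sqrt (1 - s ^ 2) with hgdef
  set G := 1 / g with hGdef
  have hG : 0 < G := by positivity
  have hGg : G ^ 2 * g ^ 2 = 1 := by
    rw [hGdef]; field_simp
  have hGs : G ^ 2 * (1 - s ^ 2) = 1 := by rw [← hg2]; exact hGg
  have h1 := congrArg Complex.re hkappa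
  have h2 := congrArg Complex.im hkappa
  simp only [pow_two, Complex.mul_re, Complex.mul_im, Complex.add_re, Complex.add_im,
    Complex.ofReal_re, Complex.ofReal_im, mul_zero, zero_mul, sub_zero, add_zero,
    zero_add, zero_sub, neg_zero] at h1 h2
  set u := kappa.re with hu
  set w := kappa.im with hw
  set x := lam.re with hx
  set y := lam.im with hy
  have e1 : u ^ 2 - w ^ 2 = G ^ 2 * (x ^ 2 - y ^ 2) + m ^ 2 := by
    linear_combination h1 + m ^ 2 * hGg
  have e2 : u * w = G ^ 2 * (x * y) := by linear_combination h2 / 2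
  have hre : kappa₁.re = G * s * x := by
    have hk : kappa₁ = (G : ℂ) * (s : ℂ) * lam := rfl
    rw [hk]
    simp [Complex.mul_re, Complex.mul_im]
    exact Or.inl rfl
  rw [hre]
  have hpos : 0 < G * s * x := by positivity
  refine ⟨hpos, ?_⟩
  have hprod : (u ^ 2 - (G * s * x) ^ 2) * (w ^ 2 + (G * s * x) ^ 2) =
      G ^ 2 * x ^ 2 * y ^ 2 + G ^ 2 * s ^ 2 * x ^ 4 + G ^ 2 * s ^ 2 * m ^ 2 * x ^ 2 := by
    linear_combination (u * w + G ^ 2 * x * y) * e2 + (G * s * x) ^ 2 * e1 +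
      (G ^ 2 * x ^ 2 * y ^ 2 + G ^ 2 * s ^ 2 * x ^ 4) * hGs
  have hfac : 0 < (u ^ 2 - (G * s * x) ^ 2) * (w ^ 2 + (G * s * x) ^ 2) := by
    rw [hprod]; positivity
  have h3 : 0 < w ^ 2 + (G * s * x) ^ 2 := by positivity
  have key : (G * s * x) ^ 2 < u ^ 2 := by nlinarith [hfac, h3]
  nlinarith [key, hpos, hkre]
end

section
/- Let a, b, f: [0,∞) → [0,∞) with f(t) ≤ a/(1+t)^{3/2} + b ∫₀ᵗ (1+|t−s|)^{−3/2} [ f(s) ∫ₛ^{t₁} f(τ)² dτ + f(s)² ] ds for 0 ≤ t ≤ t₁, and let m(t) = sup_{0≤s≤t} (1+s)^{3/2} f(s). Then there exists a constant I̅ < ∞ (depending only on the kernel) such that m(t₁) ≤ C a + C I̅ (m(t₁)³ + m(t₁)²), where I(t₁) = sup_{t∈[0,t₁]} ∫₀ᵗ (1+t)^{3/2}(1+|t−s|)^{−3/2} [ (1+s)^{−3/2} ∫ₛ^{t₁}(1+τ)^{−3} dτ + (1+s)^{−3} ] ds is uniformly bounded in t₁. -/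
open MeasureTheory intervalIntegral Set

namespace MajorantAux


lemma rpow_negdiv {u : ℝ} (hu : 0 ≤ u) (p q : ℝ) : u ^ (-p/q) = (u ^ (p/q))⁻¹ := by
  rw [neg_div, Real.rpow_neg hu]

lemma sq_rpow {u : ℝ} (hu : 0 ≤ u) : (u ^ (-(3:ℝ)/2)) ^ 2 = u ^ (-(3:ℝ)) := by
  rw [← Real.rpow_natCast (u ^ (-(3:ℝ)/2)) 2, ← Real.rpow_mul hu]
  norm_num

lemma cont_one_add (p : ℝ) {A : Set ℝ} (hA : ∀ x ∈ A, 0 ≤ x) :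
    ContinuousOn (fun s : ℝ => (1+s) ^ p) A := by
  have h : ContinuousOn (fun s : ℝ => 1 + s) A := by fun_prop
  exact h.rpow_const (fun x hx => Or.inl (by have := hA x hx; nlinarith))

lemma cont_one_add_sub (t p : ℝ) {A : Set ℝ} (hA : ∀ x ∈ A, x ≤ t) :
    ContinuousOn (fun s : ℝ => (1+(t-s)) ^ p) A := by
  have h : ContinuousOn (fun s : ℝ => 1 + (t - s)) A := by fun_prop
  exact h.rpow_const (fun x hx => Or.inl (by have := hA x hx; nlinarith))

lemma Jint (s u : ℝ) (hs : 0 ≤ s) (hu : 0 ≤ u) :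
    (∫ τ in s..u, (1+τ) ^ (-(3:ℝ))) =
      1/2 * (1+s) ^ (-(2:ℝ)) - 1/2 * (1+u) ^ (-(2:ℝ)) := by
  have key : ∀ τ ∈ Set.uIcc s u,
      HasDerivAt (fun τ : ℝ => -(1/2) * (1+τ) ^ (-(2:ℝ))) ((1+τ) ^ (-(3:ℝ))) τ := by
    intro τ hτ
    have hτ0 : 0 ≤ τ := le_trans (le_min hs hu) hτ.1
    have hne : (1:ℝ) + τ ≠ 0 := by nlinarith
    have h1 : HasDerivAt (fun τ : ℝ => 1 + τ) 1 τ := (hasDerivAt_id τ).const_add 1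
    have h2 := (h1.rpow_const (p := -(2:ℝ)) (Or.inl hne)).const_mul (-(1/2 : ℝ))
    refine h2.congr_deriv ?_
    rw [show (-(2:ℝ) - 1) = -(3:ℝ) by norm_num]
    ring
  have hint : IntervalIntegrable (fun τ : ℝ => (1+τ) ^ (-(3:ℝ))) volume s u :=
    (cont_one_add (-(3:ℝ)) (fun x hx => le_trans (le_min hs hu) hx.1)).intervalIntegrable
  rw [integral_eq_sub_of_hasDerivAt key hint]
  ring

lemma Kint (t x y : ℝ) (hx : 0 ≤ x) (hxy : x ≤ y) (hyt : y ≤ t) :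
    (∫ s in x..y, (1+(t-s)) ^ (-(3:ℝ)/2)) =
      2 * (1+(t-y)) ^ (-(1:ℝ)/2) - 2 * (1+(t-x)) ^ (-(1:ℝ)/2) := by
  have key : ∀ s ∈ Set.uIcc x y,
      HasDerivAt (fun s : ℝ => 2 * (1+(t-s)) ^ (-(1:ℝ)/2)) ((1+(t-s)) ^ (-(3:ℝ)/2)) s := by
    intro s hs
    rw [Set.uIcc_of_le hxy] at hs
    have hne : (1:ℝ) + (t - s) ≠ 0 := by have := hs.2; nlinarith
    have h1 : HasDerivAt (fun s : ℝ => 1 + (t - s)) (-1) s := by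
      have := ((hasDerivAt_id s).const_sub t).const_add (1 : ℝ)
      simpa using this
    have h2 := (h1.rpow_const (p := -(1:ℝ)/2) (Or.inl hne)).const_mul (2 : ℝ)
    refine h2.congr_deriv ?_
    rw [show (-(1:ℝ)/2 - 1) = -(3:ℝ)/2 by norm_num]
    ring
  have hint : IntervalIntegrable (fun s : ℝ => (1+(t-s)) ^ (-(3:ℝ)/2)) volume x y := by
    apply (cont_one_add_sub t (-(3:ℝ)/2) (fun z hz => ?_)).intervalIntegrable
    rw [Set.uIcc_of_le hxy] at hz; linarith [hz.2]
  rw [integral_eq_sub_of_hasDerivAt key hint]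

lemma two_rpow_le_three : (2:ℝ) ^ ((3:ℝ)/2) ≤ 3 := by
  have h0 : (0:ℝ) ≤ 2 ^ ((3:ℝ)/2) := Real.rpow_nonneg (by norm_num) _
  have hsq : ((2:ℝ) ^ ((3:ℝ)/2)) ^ 2 = 8 := by
    rw [← Real.rpow_natCast ((2:ℝ) ^ ((3:ℝ)/2)) 2, ← Real.rpow_mul (by norm_num : (0:ℝ) ≤ 2)]
    rw [show ((3:ℝ)/2 * (2:ℕ) : ℝ) = ((3:ℕ):ℝ) by push_cast; ring, Real.rpow_natCast]
    norm_num
  nlinarith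

lemma mulPK {u : ℝ} (hu : 0 < u) : u ^ ((3:ℝ)/2) * (u/2) ^ (-(3:ℝ)/2) = 2 ^ ((3:ℝ)/2) := by
  rw [rpow_negdiv (by positivity) 3 2, Real.div_rpow hu.le (by norm_num : (0:ℝ) ≤ 2)]
  have h1 : u ^ ((3:ℝ)/2) ≠ 0 := by positivity
  have h2 : (2:ℝ) ^ ((3:ℝ)/2) ≠ 0 := by positivity
  field_simp

lemma half_rpow_neg3 {u : ℝ} (hu : 0 < u) : (u/2) ^ (-(3:ℝ)) = 8 * u ^ (-(3:ℝ)) := by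
  rw [show (-(3:ℝ)) = -((3:ℝ)) by norm_num, Real.rpow_neg (by positivity), Real.rpow_neg hu.le,
    Real.div_rpow hu.le (by norm_num : (0:ℝ) ≤ 2)]
  rw [show ((3:ℝ)) = ((3:ℕ):ℝ) by push_cast; ring, Real.rpow_natCast, Real.rpow_natCast]
  have h1 : u ^ (3:ℕ) ≠ 0 := pow_ne_zero _ (ne_of_gt hu)
  field_simp
  ring

lemma conv (t₁ t : ℝ) (ht : 0 ≤ t) (ht1 : t ≤ t₁) :
    (∫ s in (0:ℝ)..t, (1+t) ^ ((3:ℝ)/2) *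
      ((1+(t-s)) ^ (-(3:ℝ)/2) *
        ((1+s) ^ (-(3:ℝ)/2) * (1/2 * (1+s) ^ (-(2:ℝ)) - 1/2 * (1+t₁) ^ (-(2:ℝ)))
          + (1+s) ^ (-(3:ℝ))))) ≤ 100 := by
  have h1t : (0:ℝ) < 1 + t := by linarith
  set G : ℝ → ℝ := fun s => (1+t) ^ ((3:ℝ)/2) *
      ((1+(t-s)) ^ (-(3:ℝ)/2) *
        ((1+s) ^ (-(3:ℝ)/2) * (1/2 * (1+s) ^ (-(2:ℝ)) - 1/2 * (1+t₁) ^ (-(2:ℝ)))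
          + (1+s) ^ (-(3:ℝ)))) with hG
  set g : ℝ → ℝ := fun s => (1+t) ^ ((3:ℝ)/2) *
      ((1+(t-s)) ^ (-(3:ℝ)/2) * (3/2 * (1+s) ^ (-(3:ℝ)))) with hg
  -- pointwise bound G ≤ g on Icc 0 t
  have hGg : ∀ s ∈ Icc (0:ℝ) t, G s ≤ g s := by
    intro s hs
    have hs0 : 0 ≤ s := hs.1
    have hst : s ≤ t := hs.2
    have h1s : (0:ℝ) < 1 + s := by linarith
    have hbracket : (1+s) ^ (-(3:ℝ)/2) * (1/2 * (1+s) ^ (-(2:ℝ)) - 1/2 * (1+t₁) ^ (-(2:ℝ)))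
        + (1+s) ^ (-(3:ℝ)) ≤ 3/2 * (1+s) ^ (-(3:ℝ)) := by
      have h2 : (0:ℝ) ≤ (1+t₁) ^ (-(2:ℝ)) := Real.rpow_nonneg (by linarith) _
      have h3 : (1+s) ^ (-(3:ℝ)/2) * (1+s) ^ (-(2:ℝ)) = (1+s) ^ (-(3:ℝ)/2 + -(2:ℝ)) :=
        (Real.rpow_add h1s _ _).symm
      have h4 : (1+s) ^ (-(3:ℝ)/2 + -(2:ℝ)) ≤ (1+s) ^ (-(3:ℝ)) :=
        Real.rpow_le_rpow_of_exponent_le (by linarith) (by norm_num)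
      have h5 : (0:ℝ) ≤ (1+s) ^ (-(3:ℝ)/2) := Real.rpow_nonneg (by linarith) _
      nlinarith
    have hK : (0:ℝ) ≤ (1+(t-s)) ^ (-(3:ℝ)/2) := Real.rpow_nonneg (by linarith) _
    have hP : (0:ℝ) ≤ (1+t) ^ ((3:ℝ)/2) := Real.rpow_nonneg (by linarith) _
    simp only [hG, hg]
    gcongr
  -- integrability
  have hGc : IntervalIntegrable G volume 0 t := by
    apply ContinuousOn.intervalIntegrable
    rw [uIcc_of_le ht]
    have h0 : ∀ x ∈ Icc (0:ℝ) t, 0 ≤ x := fun x hx => hx.1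
    have hT : ∀ x ∈ Icc (0:ℝ) t, x ≤ t := fun x hx => hx.2
    exact continuousOn_const.mul ((cont_one_add_sub t _ hT).mul
      (((cont_one_add _ h0).mul ((continuousOn_const.mul (cont_one_add _ h0)).sub
        continuousOn_const)).add (cont_one_add _ h0)))
  have hgc0 : ∀ x y : ℝ, 0 ≤ x → x ≤ y → y ≤ t → IntervalIntegrable g volume x y := by
    intro x y hx hxy hyt
    apply ContinuousOn.intervalIntegrable
    rw [uIcc_of_le hxy]
    have h0 : ∀ z ∈ Icc x y, 0 ≤ z := fun z hz => le_trans hx hz.1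
    have hT : ∀ z ∈ Icc x y, z ≤ t := fun z hz => le_trans hz.2 hyt
    exact continuousOn_const.mul ((cont_one_add_sub t _ hT).mul
      (continuousOn_const.mul (cont_one_add _ h0)))
  have hgc : IntervalIntegrable g volume 0 t := hgc0 0 t le_rfl ht le_rfl
  have hmono : (∫ s in (0:ℝ)..t, G s) ≤ ∫ s in (0:ℝ)..t, g s :=
    integral_mono_on ht hGc hgc hGg
  have ht2 : 0 ≤ t/2 := by linarith
  have ht2' : t/2 ≤ t := by linarith
  have hsplit : (∫ s in (0:ℝ)..t, g s)
      = (∫ s in (0:ℝ)..(t/2), g s) + ∫ s in (t/2)..t, g s :=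
    (integral_add_adjacent_intervals (hgc0 0 (t/2) le_rfl ht2 ht2')
      (hgc0 (t/2) t ht2 ht2' le_rfl)).symm
  -- piece 1
  have hp1 : (∫ s in (0:ℝ)..(t/2), g s) ≤ 9/4 := by
    have hbd : ∀ s ∈ Icc (0:ℝ) (t/2), g s ≤ 9/2 * (1+s) ^ (-(3:ℝ)) := by
      intro s hs
      have hs0 : 0 ≤ s := hs.1
      have hst : s ≤ t/2 := hs.2
      have hb : (1+t)/2 ≤ 1 + (t - s) := by linarith
      have h1 : (1+(t-s)) ^ (-(3:ℝ)/2) ≤ ((1+t)/2) ^ (-(3:ℝ)/2) :=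
        Real.rpow_le_rpow_of_nonpos (by linarith) hb (by norm_num)
      have h2 : (1+t) ^ ((3:ℝ)/2) * ((1+t)/2) ^ (-(3:ℝ)/2) = 2 ^ ((3:ℝ)/2) := mulPK h1t
      have hP : (0:ℝ) < (1+t) ^ ((3:ℝ)/2) := Real.rpow_pos_of_pos h1t _
      have h3 : (1+t) ^ ((3:ℝ)/2) * (1+(t-s)) ^ (-(3:ℝ)/2) ≤ 3 := by
        calc (1+t) ^ ((3:ℝ)/2) * (1+(t-s)) ^ (-(3:ℝ)/2)
            ≤ (1+t) ^ ((3:ℝ)/2) * ((1+t)/2) ^ (-(3:ℝ)/2) :=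
              mul_le_mul_of_nonneg_left h1 hP.le
          _ = 2 ^ ((3:ℝ)/2) := h2
          _ ≤ 3 := two_rpow_le_three
      have hS : (0:ℝ) ≤ (1+s) ^ (-(3:ℝ)) := Real.rpow_nonneg (by linarith) _
      calc g s = ((1+t) ^ ((3:ℝ)/2) * (1+(t-s)) ^ (-(3:ℝ)/2)) * (3/2 * (1+s) ^ (-(3:ℝ))) := by
            simp only [hg]; ring
        _ ≤ 3 * (3/2 * (1+s) ^ (-(3:ℝ))) := by
            apply mul_le_mul_of_nonneg_right h3 (by positivity)
        _ = 9/2 * (1+s) ^ (-(3:ℝ)) := by ring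
    have hic : IntervalIntegrable (fun s : ℝ => 9/2 * (1+s) ^ (-(3:ℝ))) volume 0 (t/2) := by
      apply ContinuousOn.intervalIntegrable
      rw [uIcc_of_le ht2]
      exact continuousOn_const.mul (cont_one_add _ (fun x hx => hx.1))
    have := integral_mono_on ht2 (hgc0 0 (t/2) le_rfl ht2 ht2') hic hbd
    have hval : (∫ s in (0:ℝ)..(t/2), 9/2 * (1+s) ^ (-(3:ℝ)))
        = 9/2 * (1/2 * (1+(0:ℝ)) ^ (-(2:ℝ)) - 1/2 * (1+t/2) ^ (-(2:ℝ))) := by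
      rw [intervalIntegral.integral_const_mul, Jint 0 (t/2) le_rfl ht2]
    have hnn : (0:ℝ) ≤ (1+t/2) ^ (-(2:ℝ)) := Real.rpow_nonneg (by linarith) _
    rw [hval] at this
    norm_num at this
    linarith [inv_nonneg.mpr (sq_nonneg (1+t/2))]
  -- piece 2
  have hp2 : (∫ s in (t/2)..t, g s) ≤ 24 := by
    have hbd : ∀ s ∈ Icc (t/2) t, g s ≤ 12 * (1+(t-s)) ^ (-(3:ℝ)/2) := by
      intro s hs
      have hs0 : t/2 ≤ s := hs.1
      have hst : s ≤ t := hs.2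
      have hb : (1+t)/2 ≤ 1 + s := by linarith
      have h1 : (1+s) ^ (-(3:ℝ)) ≤ ((1+t)/2) ^ (-(3:ℝ)) :=
        Real.rpow_le_rpow_of_nonpos (by linarith) hb (by norm_num)
      have h2 : ((1+t)/2) ^ (-(3:ℝ)) = 8 * (1+t) ^ (-(3:ℝ)) := half_rpow_neg3 h1t
      have h3 : (1+t) ^ ((3:ℝ)/2) * (1+t) ^ (-(3:ℝ)) = (1+t) ^ ((3:ℝ)/2 + -(3:ℝ)) :=
        (Real.rpow_add h1t _ _).symm
      have h4 : (1+t) ^ ((3:ℝ)/2 + -(3:ℝ)) ≤ 1 :=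
        Real.rpow_le_one_of_one_le_of_nonpos (by linarith) (by norm_num)
      have hP : (0:ℝ) < (1+t) ^ ((3:ℝ)/2) := Real.rpow_pos_of_pos h1t _
      have h5 : (1+t) ^ ((3:ℝ)/2) * (1+s) ^ (-(3:ℝ)) ≤ 8 := by
        calc (1+t) ^ ((3:ℝ)/2) * (1+s) ^ (-(3:ℝ))
            ≤ (1+t) ^ ((3:ℝ)/2) * ((1+t)/2) ^ (-(3:ℝ)) := mul_le_mul_of_nonneg_left h1 hP.le
          _ = 8 * ((1+t) ^ ((3:ℝ)/2) * (1+t) ^ (-(3:ℝ))) := by rw [h2]; ring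
          _ ≤ 8 * 1 := by rw [h3]; linarith
          _ = 8 := by ring
      have hK : (0:ℝ) ≤ (1+(t-s)) ^ (-(3:ℝ)/2) := Real.rpow_nonneg (by linarith) _
      calc g s = ((1+t) ^ ((3:ℝ)/2) * (1+s) ^ (-(3:ℝ))) * (3/2 * (1+(t-s)) ^ (-(3:ℝ)/2)) := by
            simp only [hg]; ring
        _ ≤ 8 * (3/2 * (1+(t-s)) ^ (-(3:ℝ)/2)) := by
            apply mul_le_mul_of_nonneg_right h5 (by positivity)
        _ = 12 * (1+(t-s)) ^ (-(3:ℝ)/2) := by ring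
    have hic : IntervalIntegrable (fun s : ℝ => 12 * (1+(t-s)) ^ (-(3:ℝ)/2)) volume (t/2) t := by
      apply ContinuousOn.intervalIntegrable
      rw [uIcc_of_le ht2']
      exact continuousOn_const.mul (cont_one_add_sub t _ (fun x hx => hx.2))
    have hmono2 := integral_mono_on ht2' (hgc0 (t/2) t ht2 ht2' le_rfl) hic hbd
    have hval : (∫ s in (t/2)..t, 12 * (1+(t-s)) ^ (-(3:ℝ)/2))
        = 12 * (2 * (1+(t-t)) ^ (-(1:ℝ)/2) - 2 * (1+(t-t/2)) ^ (-(1:ℝ)/2)) := by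
      rw [intervalIntegral.integral_const_mul, Kint t (t/2) t ht2 ht2' le_rfl]
    have hnn : (0:ℝ) ≤ (1+(t-t/2)) ^ (-(1:ℝ)/2) := Real.rpow_nonneg (by linarith) _
    rw [hval] at hmono2
    norm_num at hmono2
    linarith
  calc (∫ s in (0:ℝ)..t, G s) ≤ ∫ s in (0:ℝ)..t, g s := hmono
    _ = _ + _ := hsplit
    _ ≤ 9/4 + 24 := add_le_add hp1 hp2
    _ ≤ 100 := by norm_num

end MajorantAux

open MajorantAux

/-- Majorant integral inequality: if
f(t) ≤ a/(1+t)^{3/2} + b ∫₀ᵗ (1+|t−s|)^{−3/2}[f(s)∫ₛ^{t₁} f(τ)²dτ + f(s)²]ds on [0,t₁],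
then with m(t) = sup_{0≤s≤t}(1+s)^{3/2}f(s) there are constants C and I̅ (depending only
on b and the kernel) such that I(t₁) ≤ I̅ and m(t₁) ≤ C a + C I̅ (m(t₁)³ + m(t₁)²). -/
theorem majorant_inequality :
    ∀ b : ℝ, 0 ≤ b → ∃ C Ibar : ℝ, 0 ≤ C ∧ 0 ≤ Ibar ∧
      ∀ (a : ℝ) (f : ℝ → ℝ) (t₁ : ℝ), 0 ≤ a → 0 ≤ t₁ → (∀ t, 0 ≤ f t) →
        (∀ t, 0 ≤ t → t ≤ t₁ →
          f t ≤ a / (1 + t) ^ ((3 : ℝ)/2) +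
            b * ∫ s in (0 : ℝ)..t, (1 + |t - s|) ^ (-(3 : ℝ)/2) *
              (f s * (∫ τ in s..t₁, f τ ^ 2) + f s ^ 2)) →
        (let m : ℝ → ℝ := fun t =>
            sSup ((fun s => (1 + s) ^ ((3 : ℝ)/2) * f s) '' Set.Icc 0 t)
         let I : ℝ → ℝ := fun u =>
            sSup ((fun t => ∫ s in (0 : ℝ)..t,
              (1 + t) ^ ((3 : ℝ)/2) * (1 + |t - s|) ^ (-(3 : ℝ)/2) *
                ((1 + s) ^ (-(3 : ℝ)/2) * (∫ τ in s..u, (1 + τ) ^ (-(3 : ℝ))) +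
                  (1 + s) ^ (-(3 : ℝ)))) '' Set.Icc 0 u)
         I t₁ ≤ Ibar ∧ m t₁ ≤ C * a + C * Ibar * (m t₁ ^ 3 + m t₁ ^ 2)) := by
  intro b hb
  have hC0 : (0:ℝ) ≤ max 1 b := le_trans zero_le_one (le_max_left 1 b)
  refine ⟨max 1 b, 100, hC0, by norm_num, ?_⟩
  intro a f t₁ ha ht₁ hf0 hyp
  dsimp only
  constructor
  · -- I t₁ ≤ 100
    apply Real.sSup_le _ (by norm_num)
    rintro x ⟨t, ht, rfl⟩
    have hcong : (∫ s in (0:ℝ)..t,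
        (1 + t) ^ ((3:ℝ)/2) * (1 + |t - s|) ^ (-(3:ℝ)/2) *
          ((1 + s) ^ (-(3:ℝ)/2) * (∫ τ in s..t₁, (1 + τ) ^ (-(3:ℝ))) + (1 + s) ^ (-(3:ℝ))))
        = ∫ s in (0:ℝ)..t, (1+t) ^ ((3:ℝ)/2) * ((1+(t-s)) ^ (-(3:ℝ)/2) *
          ((1+s) ^ (-(3:ℝ)/2) * (1/2 * (1+s) ^ (-(2:ℝ)) - 1/2 * (1+t₁) ^ (-(2:ℝ)))
            + (1+s) ^ (-(3:ℝ)))) := by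
      apply integral_congr
      intro s hs
      rw [uIcc_of_le ht.1] at hs
      simp only
      rw [abs_of_nonneg (by linarith [hs.2] : (0:ℝ) ≤ t - s), Jint s t₁ hs.1 ht₁, mul_assoc]
    beta_reduce
    rw [hcong]
    exact conv t₁ t ht.1 ht.2
  · set S := (fun s => (1 + s) ^ ((3:ℝ)/2) * f s) '' Icc (0:ℝ) t₁ with hSdef
    by_cases hB : BddAbove S
    · set M := sSup S with hM
      have hM0 : 0 ≤ M := by
        apply Real.sSup_nonneg
        rintro x ⟨s, hs, rfl⟩
        have h1 : (0:ℝ) ≤ (1+s) ^ ((3:ℝ)/2) := Real.rpow_nonneg (by linarith [hs.1]) _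
        exact mul_nonneg h1 (hf0 s)
      have hfM : ∀ s, s ∈ Icc (0:ℝ) t₁ → f s ≤ M * (1+s) ^ (-(3:ℝ)/2) := by
        intro s hs
        have h1 : (1+s) ^ ((3:ℝ)/2) * f s ≤ M := le_csSup hB ⟨s, hs, rfl⟩
        have hp : (0:ℝ) < (1+s) ^ ((3:ℝ)/2) :=
          Real.rpow_pos_of_pos (by linarith [hs.1]) _
        rw [rpow_negdiv (by linarith [hs.1]) 3 2, ← div_eq_mul_inv, le_div_iff₀ hp]
        linarith
      have hJnn : ∀ s : ℝ, 0 ≤ s → s ≤ t₁ →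
          0 ≤ 1/2 * (1+s) ^ (-(2:ℝ)) - 1/2 * (1+t₁) ^ (-(2:ℝ)) := by
        intro s hs hst
        have := Real.rpow_le_rpow_of_nonpos (show (0:ℝ) < 1+s by linarith)
          (by linarith : 1+s ≤ 1+t₁) (by norm_num : -(2:ℝ) ≤ 0)
        linarith
      have hsq : ∀ τ : ℝ, 0 ≤ τ → τ ≤ t₁ → f τ ^ 2 ≤ M^2 * (1+τ) ^ (-(3:ℝ)) := by
        intro τ hτ0 hτ1
        have h1 : f τ ≤ M * (1+τ) ^ (-(3:ℝ)/2) := hfM τ ⟨hτ0, hτ1⟩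
        have h2 : f τ ^ 2 ≤ (M * (1+τ) ^ (-(3:ℝ)/2)) ^ 2 := pow_le_pow_left₀ (hf0 τ) h1 2
        calc f τ ^ 2 ≤ (M * (1+τ) ^ (-(3:ℝ)/2)) ^ 2 := h2
          _ = M^2 * ((1+τ) ^ (-(3:ℝ)/2)) ^ 2 := by ring
          _ = M^2 * (1+τ) ^ (-(3:ℝ)) := by rw [sq_rpow (by linarith : (0:ℝ) ≤ 1+τ)]
      have hinner : ∀ s : ℝ, 0 ≤ s → s ≤ t₁ →
          (∫ τ in s..t₁, f τ ^ 2) ≤ M^2 * (1/2 * (1+s) ^ (-(2:ℝ)) - 1/2 * (1+t₁) ^ (-(2:ℝ))) := by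
        intro s hs hst
        by_cases hfi : IntervalIntegrable (fun τ => f τ ^ 2) volume s t₁
        · have hgi : IntervalIntegrable (fun τ : ℝ => M^2 * (1+τ) ^ (-(3:ℝ))) volume s t₁ := by
            apply ContinuousOn.intervalIntegrable
            rw [uIcc_of_le hst]
            exact continuousOn_const.mul (cont_one_add _ (fun x hx => le_trans hs hx.1))
          have hpt : ∀ τ ∈ Icc s t₁, f τ ^ 2 ≤ M^2 * (1+τ) ^ (-(3:ℝ)) :=
            fun τ hτ => hsq τ (le_trans hs hτ.1) hτ.2
          calc (∫ τ in s..t₁, f τ ^ 2) ≤ ∫ τ in s..t₁, M^2 * (1+τ) ^ (-(3:ℝ)) :=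
              integral_mono_on hst hfi hgi hpt
            _ = M^2 * (1/2 * (1+s) ^ (-(2:ℝ)) - 1/2 * (1+t₁) ^ (-(2:ℝ))) := by
              rw [intervalIntegral.integral_const_mul, Jint s t₁ hs ht₁]
        · rw [integral_undef hfi]
          exact mul_nonneg (sq_nonneg M) (hJnn s hs hst)
      -- main pointwise bound
      have hmain : ∀ t ∈ Icc (0:ℝ) t₁,
          (1+t) ^ ((3:ℝ)/2) * f t ≤ a + b * (100 * (M^3 + M^2)) := by
        intro t ht
        have h1t : (0:ℝ) < 1 + t := by linarith [ht.1]
        have hft := hyp t ht.1 ht.2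
        set D : ℝ → ℝ := fun s => (1+(t-s)) ^ (-(3:ℝ)/2) *
          ((1+s) ^ (-(3:ℝ)/2) * (1/2 * (1+s) ^ (-(2:ℝ)) - 1/2 * (1+t₁) ^ (-(2:ℝ)))
            + (1+s) ^ (-(3:ℝ))) with hD
        set h : ℝ → ℝ := fun s => (1 + |t - s|) ^ (-(3:ℝ)/2) *
          (f s * (∫ τ in s..t₁, f τ ^ 2) + f s ^ 2) with hh
        have hDnn : ∀ s ∈ Icc (0:ℝ) t, 0 ≤ D s := by
          intro s hs
          have h1s : (0:ℝ) < 1 + s := by linarith [hs.1]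
          have hK : (0:ℝ) ≤ (1+(t-s)) ^ (-(3:ℝ)/2) := Real.rpow_nonneg (by linarith [hs.2]) _
          have hx1 : (0:ℝ) ≤ (1+s) ^ (-(3:ℝ)/2) := Real.rpow_nonneg h1s.le _
          have hy1 : (0:ℝ) ≤ (1+s) ^ (-(3:ℝ)) := Real.rpow_nonneg h1s.le _
          have hJ := hJnn s hs.1 (le_trans hs.2 ht.2)
          simp only [hD]
          positivity
        have hDc : IntervalIntegrable (fun s => (M^3+M^2) * D s) volume 0 t := by
          apply ContinuousOn.intervalIntegrable
          rw [uIcc_of_le ht.1]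
          have h0 : ∀ x ∈ Icc (0:ℝ) t, 0 ≤ x := fun x hx => hx.1
          have hT : ∀ x ∈ Icc (0:ℝ) t, x ≤ t := fun x hx => hx.2
          simp only [hD]
          exact continuousOn_const.mul ((cont_one_add_sub t _ hT).mul
            (((cont_one_add _ h0).mul ((continuousOn_const.mul (cont_one_add _ h0)).sub
              continuousOn_const)).add (cont_one_add _ h0)))
        have hptw : ∀ s ∈ Icc (0:ℝ) t, h s ≤ (M^3 + M^2) * D s := by
          intro s hs
          have hs0 : 0 ≤ s := hs.1
          have hst1 : s ≤ t₁ := le_trans hs.2 ht.2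
          have h1s : (0:ℝ) < 1 + s := by linarith
          have habs : |t - s| = t - s := abs_of_nonneg (by linarith [hs.2])
          have hfs : f s ≤ M * (1+s) ^ (-(3:ℝ)/2) := hfM s ⟨hs0, hst1⟩
          have hIs := hinner s hs0 hst1
          have hInn : 0 ≤ ∫ τ in s..t₁, f τ ^ 2 :=
            intervalIntegral.integral_nonneg hst1 (fun τ _ => sq_nonneg _)
          have hJ := hJnn s hs0 hst1
          have hx1 : (0:ℝ) ≤ (1+s) ^ (-(3:ℝ)/2) := Real.rpow_nonneg h1s.le _
          have hy1 : (0:ℝ) ≤ (1+s) ^ (-(3:ℝ)) := Real.rpow_nonneg h1s.le _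
          have hsq' := hsq s hs0 hst1
          have e1 : f s * (∫ τ in s..t₁, f τ ^ 2)
              ≤ (M * (1+s) ^ (-(3:ℝ)/2)) * (M^2 * (1/2 * (1+s) ^ (-(2:ℝ))
                  - 1/2 * (1+t₁) ^ (-(2:ℝ)))) :=
            mul_le_mul hfs hIs hInn (by positivity)
          have hprod : f s * (∫ τ in s..t₁, f τ ^ 2) + f s ^ 2
              ≤ (M^3 + M^2) * ((1+s) ^ (-(3:ℝ)/2) * (1/2 * (1+s) ^ (-(2:ℝ))
                  - 1/2 * (1+t₁) ^ (-(2:ℝ))) + (1+s) ^ (-(3:ℝ))) := by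
            nlinarith [mul_nonneg (mul_nonneg hx1 hJ) (pow_nonneg hM0 2),
              mul_nonneg hy1 (pow_nonneg hM0 3), mul_nonneg hx1 hJ]
          have hK : (0:ℝ) ≤ (1+(t-s)) ^ (-(3:ℝ)/2) := Real.rpow_nonneg (by linarith [hs.2]) _
          calc h s = (1+(t-s)) ^ (-(3:ℝ)/2) * (f s * (∫ τ in s..t₁, f τ ^ 2) + f s ^ 2) := by
                simp only [hh, habs]
            _ ≤ (1+(t-s)) ^ (-(3:ℝ)/2) * ((M^3 + M^2) * ((1+s) ^ (-(3:ℝ)/2)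
                  * (1/2 * (1+s) ^ (-(2:ℝ)) - 1/2 * (1+t₁) ^ (-(2:ℝ))) + (1+s) ^ (-(3:ℝ)))) :=
                mul_le_mul_of_nonneg_left hprod hK
            _ = (M^3 + M^2) * D s := by simp only [hD]; ring
        have hIh : (∫ s in (0:ℝ)..t, h s) ≤ ∫ s in (0:ℝ)..t, (M^3+M^2) * D s := by
          by_cases hhi : IntervalIntegrable h volume 0 t
          · exact integral_mono_on ht.1 hhi hDc hptw
          · rw [integral_undef hhi]
            apply intervalIntegral.integral_nonneg ht.1
            intro s hs
            exact mul_nonneg (by positivity) (hDnn s hs)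
        have hconv : (∫ s in (0:ℝ)..t, (1+t) ^ ((3:ℝ)/2) * D s) ≤ 100 := by
          simp only [hD]
          exact conv t₁ t ht.1 ht.2
        have hP : (0:ℝ) < (1+t) ^ ((3:ℝ)/2) := Real.rpow_pos_of_pos h1t _
        have step : (1+t) ^ ((3:ℝ)/2) * f t
            ≤ a + b * ((1+t) ^ ((3:ℝ)/2) * ∫ s in (0:ℝ)..t, h s) := by
          have h2 := mul_le_mul_of_nonneg_left hft hP.le
          calc (1+t) ^ ((3:ℝ)/2) * f t
              ≤ (1+t) ^ ((3:ℝ)/2) * (a / (1+t) ^ ((3:ℝ)/2) + b * ∫ s in (0:ℝ)..t, h s) := h2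
            _ = a + b * ((1+t) ^ ((3:ℝ)/2) * ∫ s in (0:ℝ)..t, h s) := by
                field_simp
        have step2 : (1+t) ^ ((3:ℝ)/2) * (∫ s in (0:ℝ)..t, h s) ≤ 100 * (M^3 + M^2) := by
          calc (1+t) ^ ((3:ℝ)/2) * (∫ s in (0:ℝ)..t, h s)
              ≤ (1+t) ^ ((3:ℝ)/2) * ∫ s in (0:ℝ)..t, (M^3+M^2) * D s :=
                mul_le_mul_of_nonneg_left hIh hP.le
            _ = (M^3+M^2) * ∫ s in (0:ℝ)..t, (1+t) ^ ((3:ℝ)/2) * D s := by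
                rw [intervalIntegral.integral_const_mul, intervalIntegral.integral_const_mul]; ring
            _ ≤ (M^3+M^2) * 100 := mul_le_mul_of_nonneg_left hconv (by positivity)
            _ = 100 * (M^3 + M^2) := by ring
        have hb2 := mul_le_mul_of_nonneg_left step2 hb
        linarith
      -- conclude via sSup
      apply Real.sSup_le
      · rintro x ⟨s, hs, rfl⟩
        have h1 := hmain s hs
        have ha' : a ≤ max 1 b * a := le_mul_of_one_le_left ha (le_max_left 1 b)
        have hb2 : b * (100 * (M^3 + M^2)) ≤ max 1 b * 100 * (M^3 + M^2) := by
          have hbm : b ≤ max 1 b := le_max_right 1 b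
          nlinarith [pow_nonneg hM0 3, pow_nonneg hM0 2]
        simp only
        linarith
      · have h1 : (0:ℝ) ≤ max 1 b * a := mul_nonneg hC0 ha
        have h2 : (0:ℝ) ≤ max 1 b * 100 * (M^3 + M^2) := by positivity
        linarith
    · rw [Real.sSup_of_not_bddAbove hB]
      have h1 : (0:ℝ) ≤ max 1 b * a := mul_nonneg hC0 ha
      norm_num
      linarith
end
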